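/- Let F be a field and B = F⟨t, x⟩/(t², x²). The elements {w^k, w^k t, w^k x, w^k t x : k ≥ 0}, where w = xt + tx, form an F-basis of B. In particular B is infinite-dimensional and w generates a polynomial subalgebra F[w] ⊆ B. -/

import Mathlib

/-!
The algebra `B = F⟨t,x⟩/(t², x²)`: quotient of the free noncommutative
algebra on two generators (`0 ↦ t`, `1 ↦ x`) by the two-sided ideal
generated by `t²` and `x²`.
-/

noncomputable section
open FreeAlgebra

variable (F : Type) [Field F]

inductive BRel (F : Type) [Field F] :
    FreeAlgebra F (Fin 2) → FreeAlgebra F (Fin 2) → Prop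
  | t2 : BRel F (ι F 0 * ι F 0) 0
  | x2 : BRel F (ι F 1 * ι F 1) 0

abbrev B (F : Type) [Field F] := RingQuot (BRel F)

def t : B F := RingQuot.mkAlgHom F (BRel F) (ι F 0)
def x : B F := RingQuot.mkAlgHom F (BRel F) (ι F 1)
/-- `w = xt + tx` -/
def w : B F := x F * t F + t F * x F

/-- the four "tails": `1, t, x, tx` -/
def tail : Fin 4 → B F := ![1, t F, x F, t F * x F]

/-- the claimed basis elements `w^k, w^k t, w^k x, w^k t x` -/
def bElt : ℕ × Fin 4 → B F := fun ⟨k, i⟩ => w F ^ k * tail F i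

/-! ### Relations in `B` -/

lemma ht2 : t F * t F = 0 := by
  rw [t, ← map_mul, RingQuot.mkAlgHom_rel F BRel.t2, map_zero]

lemma hx2 : x F * x F = 0 := by
  rw [x, ← map_mul, RingQuot.mkAlgHom_rel F BRel.x2, map_zero]

lemma ht2l (a : B F) : a * t F * t F = 0 := by rw [mul_assoc, ht2, mul_zero]
lemma hx2l (a : B F) : a * x F * x F = 0 := by rw [mul_assoc, hx2, mul_zero]

lemma hxt : x F * t F = w F - t F * x F := by rw [w, add_sub_cancel_right]

lemma hw_t : t F * w F = w F * t F := by
  simp [w, mul_add, add_mul, ← mul_assoc, ht2, ht2l]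

lemma hw_x : x F * w F = w F * x F := by
  simp [w, mul_add, add_mul, ← mul_assoc, hx2, hx2l]

lemma hxtx : x F * (t F * x F) = w F * x F := by
  rw [← mul_assoc, hxt, sub_mul, mul_assoc, hx2, mul_zero, sub_zero]

lemma htxt : t F * x F * t F = w F * t F := by
  rw [mul_assoc, hxt, mul_sub, ← mul_assoc, ht2, zero_mul, sub_zero, hw_t]

lemma htxtx : (t F * x F) * (t F * x F) = w F * (t F * x F) := by
  rw [← mul_assoc, htxt, mul_assoc]

lemma comm_tail (i : Fin 4) (l : ℕ) : tail F i * w F ^ l = w F ^ l * tail F i := by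
  have ct : Commute (t F) (w F) := hw_t F
  have cx : Commute (x F) (w F) := hw_x F
  fin_cases i
  · simp [tail]
  · simpa [tail] using (ct.pow_right l).eq
  · simpa [tail] using (cx.pow_right l).eq
  · simpa [tail] using ((ct.pow_right l).mul_left (cx.pow_right l)).eq

/-! ### The regular representation on `(ℕ × Fin 4) →₀ F` -/

abbrev V (F : Type) [Field F] := (ℕ × Fin 4) →₀ F

def e (p : ℕ × Fin 4) : V F := Finsupp.single p 1

def bV : Module.Basis (ℕ × Fin 4) F (V F) := Finsupp.basisSingleOne

lemma bV_eq (p : ℕ × Fin 4) : bV F p = e F p := by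
  simp [bV, e]

def Tfun : ℕ × Fin 4 → V F := fun p => ![e F (p.1, 1), 0, e F (p.1, 3), 0] p.2

def Xfun : ℕ × Fin 4 → V F :=
  fun p => ![e F (p.1, 2), e F (p.1 + 1, 0) - e F (p.1, 3), 0, e F (p.1 + 1, 2)] p.2

def T : Module.End F (V F) := (bV F).constr F (Tfun F)
def X : Module.End F (V F) := (bV F).constr F (Xfun F)

lemma T_e (p : ℕ × Fin 4) : T F (e F p) = Tfun F p := by
  rw [← bV_eq]; exact (bV F).constr_basis F (Tfun F) p

lemma X_e (p : ℕ × Fin 4) : X F (e F p) = Xfun F p := by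
  rw [← bV_eq]; exact (bV F).constr_basis F (Xfun F) p

lemma TT : T F * T F = 0 := by
  refine (bV F).ext fun p => ?_
  obtain ⟨k, i⟩ := p
  fin_cases i <;>
    simp [bV_eq, Module.End.mul_apply, T_e, Tfun]

lemma XX : X F * X F = 0 := by
  refine (bV F).ext fun p => ?_
  obtain ⟨k, i⟩ := p
  fin_cases i <;>
    simp [bV_eq, Module.End.mul_apply, X_e, Xfun]

def ρ : B F →ₐ[F] Module.End F (V F) :=
  RingQuot.liftAlgHom F ⟨FreeAlgebra.lift F ![T F, X F], by
    rintro a b (h | h) <;>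
      simp [map_mul, FreeAlgebra.lift_ι_apply, TT, XX]⟩

lemma ρ_t : ρ F (t F) = T F := by
  rw [t, ρ, RingQuot.liftAlgHom_mkAlgHom_apply]
  simp

lemma ρ_x : ρ F (x F) = X F := by
  rw [x, ρ, RingQuot.liftAlgHom_mkAlgHom_apply]
  simp

lemma W_e (p : ℕ × Fin 4) : ρ F (w F) (e F p) = e F (p.1 + 1, p.2) := by
  obtain ⟨k, i⟩ := p
  have : ρ F (w F) = X F * T F + T F * X F := by
    rw [w]; simp [map_add, map_mul, ρ_t, ρ_x]
  rw [this]
  fin_cases i <;>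
    simp [LinearMap.add_apply, Module.End.mul_apply, T_e, X_e, Tfun, Xfun]

lemma Wpow_e (k : ℕ) (p : ℕ × Fin 4) :
    (ρ F (w F) ^ k) (e F p) = e F (p.1 + k, p.2) := by
  induction k with
  | zero => simp
  | succ n ih =>
      rw [pow_succ', Module.End.mul_apply, ih, W_e]; rfl

lemma ρ_bElt (p : ℕ × Fin 4) : ρ F (bElt F p) (e F (0, 0)) = e F p := by
  obtain ⟨k, i⟩ := p
  have htail : ρ F (tail F i) (e F (0, 0)) = e F (0, i) := by
    fin_cases i <;>
      simp [tail, map_mul, ρ_t, ρ_x, Module.End.mul_apply, T_e, X_e, Tfun, Xfun]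
  rw [bElt, map_mul, map_pow, Module.End.mul_apply, htail, Wpow_e]
  simp

lemma hb0 (k : ℕ) : bElt F (k, 0) = w F ^ k := by simp [bElt, tail]

/-- the elements `w^k, w^k t, w^k x, w^k tx` (`k ≥ 0`) form an
`F`-basis of `B = F⟨t,x⟩/(t²,x²)`; in particular `B` is infinite-dimensional
and `w` generates a polynomial subalgebra `F[w] ⊆ B`. -/
theorem stmt_15 :
    LinearIndependent F (bElt F) ∧
    Submodule.span F (Set.range (bElt F)) = ⊤ ∧
    ¬ Module.Finite F (B F) ∧
    Function.Injective (Polynomial.aeval (w F) : Polynomial F →ₐ[F] B F) := by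
  classical
  set L : B F →ₗ[F] V F :=
    (LinearMap.applyₗ (e F (0, 0))).comp (ρ F).toLinearMap with hLdef
  have hLb : ∀ p, L (bElt F p) = e F p := fun p => ρ_bElt F p
  -- linear independence
  have hLI : LinearIndependent F (bElt F) := by
    have h1 : LinearIndependent F (e F) := by
      have h := (bV F).linearIndependent
      rwa [show ⇑(bV F) = e F from funext (bV_eq F)] at h
    refine LinearIndependent.of_comp L ?_
    rw [show (⇑L ∘ bElt F) = e F from funext fun p => hLb p]
    exact h1
  -- spanning
  set S := Submodule.span F (Set.range (bElt F)) with hS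
  have memb : ∀ k i, w F ^ k * tail F i ∈ S := fun k i =>
    Submodule.subset_span ⟨(k, i), rfl⟩
  have memb0 : ∀ i, tail F i ∈ S := fun i => by simpa using memb 0 i
  have h1S : (1 : B F) ∈ S := by simpa [tail] using memb 0 0
  have htS : t F ∈ S := by simpa [tail] using memb 0 1
  have hxS : x F ∈ S := by simpa [tail] using memb 0 2
  have hwmul : ∀ (n : ℕ) (v : B F), v ∈ S → w F ^ n * v ∈ S := by
    intro n v hv
    induction hv using Submodule.span_induction with
    | mem y hy =>
        obtain ⟨⟨k, i⟩, rfl⟩ := hy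
        have : w F ^ n * bElt F (k, i) = w F ^ (n + k) * tail F i := by
          rw [bElt, ← mul_assoc, ← pow_add]
        rw [this]; exact memb _ _
    | zero => simpa using S.zero_mem
    | add a b _ _ ha hb => rw [mul_add]; exact S.add_mem ha hb
    | smul c a _ ha => rw [mul_smul_comm]; exact S.smul_mem c ha
  have tailmul : ∀ i j : Fin 4, tail F i * tail F j ∈ S := by
    intro i j
    fin_cases i <;> fin_cases j
    · simpa [tail] using memb0 0
    · simpa [tail] using memb0 1
    · simpa [tail] using memb0 2
    · simpa [tail] using memb0 3
    · simpa [tail] using memb0 1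
    · simpa [tail, ht2] using S.zero_mem
    · simpa [tail] using memb0 3
    · simpa [tail, ← mul_assoc, ht2] using S.zero_mem
    · simpa [tail] using memb0 2
    · simpa [tail, hxt] using sub_mem (by simpa [tail] using memb 1 0) (memb0 3)
    · simpa [tail, hx2] using S.zero_mem
    · simpa [tail, hxtx] using memb 1 2
    · simpa [tail] using memb0 3
    · simpa [tail, htxt] using memb 1 1
    · simpa [tail, mul_assoc, hx2] using S.zero_mem
    · simpa [tail, htxtx] using memb 1 3
  have hmulS : ∀ a b : B F, a ∈ S → b ∈ S → a * b ∈ S := by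
    have hSS : S * S ≤ S := by
      rw [hS, Submodule.span_mul_span]
      refine Submodule.span_le.mpr ?_
      rintro _ ⟨u, hu, v, hv, rfl⟩
      obtain ⟨⟨k, i⟩, rfl⟩ := hu
      obtain ⟨⟨l, j⟩, rfl⟩ := hv
      have key : bElt F (k, i) * bElt F (l, j) = w F ^ (k + l) * (tail F i * tail F j) := by
        rw [bElt, bElt, mul_assoc (w F ^ k), ← mul_assoc (tail F i), comm_tail,
          mul_assoc (w F ^ l), ← mul_assoc (w F ^ k), ← pow_add]
      show bElt F (k, i) * bElt F (l, j) ∈ S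
      rw [key]
      exact hwmul _ _ (tailmul i j)
    intro a b ha hb
    exact hSS (Submodule.mul_mem_mul ha hb)
  have hspan : S = ⊤ := by
    rw [eq_top_iff]
    rintro b -
    obtain ⟨a, rfl⟩ := RingQuot.mkAlgHom_surjective F (BRel F) b
    induction a using FreeAlgebra.induction with
    | grade0 r =>
        rw [AlgHom.commutes, Algebra.algebraMap_eq_smul_one]
        exact S.smul_mem r h1S
    | grade1 i =>
        fin_cases i
        · exact htS
        · exact hxS
    | mul a b ha hb => rw [map_mul]; exact hmulS _ _ ha hb
    | add a b ha hb => rw [map_add]; exact S.add_mem ha hb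
  -- not finite
  have hnf : ¬ Module.Finite F (B F) := by
    intro h
    have : Finite (ℕ × Fin 4) := hLI.finite_of_isNoetherian
    exact not_finite (ℕ × Fin 4)
  -- injectivity of aeval
  have hinj : Function.Injective (Polynomial.aeval (w F) : Polynomial F →ₐ[F] B F) := by
    rw [injective_iff_map_eq_zero]
    intro p hp
    have hsum : ∑ q ∈ (Finset.range (p.natDegree + 1)).map
        ⟨fun k => ((k, 0) : ℕ × Fin 4), Prod.mk_left_injective 0⟩,
        p.coeff q.1 • bElt F q = 0 := by
      rw [Finset.sum_map]
      simp only [Function.Embedding.coeFn_mk, hb0]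
      rw [← Polynomial.aeval_eq_sum_range]
      exact hp
    have h' := linearIndependent_iff'.mp hLI _ _ hsum
    refine Polynomial.ext fun n => ?_
    rw [Polynomial.coeff_zero]
    by_cases hn : n ≤ p.natDegree
    · exact h' (n, 0) (Finset.mem_map.mpr ⟨n, Finset.mem_range.mpr (by omega), rfl⟩)
    · exact Polynomial.coeff_eq_zero_of_natDegree_lt (by omega)
  exact ⟨hLI, hspan, hnf, hinj⟩
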